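/- Let μ, ν be finite measures on ℝ with finite first moments and μ ≤_E ν. Define T^ν(μ) as the measure maximal in convex order among {η : μ ≤_cx η ≤ ν}. Then P_{T^ν(μ)} = (\tilde{P})^c, where \tilde{P}(k) = min{P_ν(k), C_ν(k) + μ(ℝ)k - \bar{μ}} and C_ν(k) = ∫(x-k)^+ ν(dx). -/

import Mathlib

open MeasureTheory Set Filter

noncomputable def pot (eta : Measure ℝ) (k : ℝ) : ℝ := ∫ x, max (k - x) 0 ∂eta

noncomputable def cpot (eta : Measure ℝ) (k : ℝ) : ℝ := ∫ x, max (x - k) 0 ∂eta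

/-- `c` is the convex hull (largest convex minorant) of `f`. -/
def IsConvexHull (f c : ℝ → ℝ) : Prop :=
  ConvexOn ℝ Set.univ c ∧ (∀ x, c x ≤ f x) ∧
    ∀ g : ℝ → ℝ, ConvexOn ℝ Set.univ g → (∀ x, g x ≤ f x) → ∀ x, g x ≤ c x

/-- Convex order: `∫ f dη ≤ ∫ f dχ` for all convex `f` for which both integrals exist. -/
def Cx (eta chi : Measure ℝ) : Prop :=
  ∀ f : ℝ → ℝ, ConvexOn ℝ Set.univ f → Integrable f eta → Integrable f chi →
    ∫ x, f x ∂eta ≤ ∫ x, f x ∂chi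

/-- Extended convex order: `∫ f dη ≤ ∫ f dχ` for all nonnegative convex `f`. -/
def ECx (eta chi : Measure ℝ) : Prop :=
  ∀ f : ℝ → ℝ, ConvexOn ℝ Set.univ f → (∀ x, 0 ≤ f x) →
    ∫⁻ x, ENNReal.ofReal (f x) ∂eta ≤ ∫⁻ x, ENNReal.ofReal (f x) ∂chi

/-- The class `𝒟(a, b)`: nonnegative, nondecreasing, convex functions vanishing at `-∞`
and asymptotic to `a * z - b` at `+∞`. -/
def MemD (a b : ℝ) (f : ℝ → ℝ) : Prop :=
  ConvexOn ℝ Set.univ f ∧ Monotone f ∧ (∀ x, 0 ≤ f x) ∧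
    Tendsto f atBot (nhds 0) ∧
    Tendsto (fun z => f z - (a * z - b)) atTop (nhds 0)

/-- `S` is the shadow of `μ` in `ν`. -/
def IsShadow (mu nu S : Measure ℝ) : Prop :=
  Cx mu S ∧ S ≤ nu ∧ ∀ eta : Measure ℝ, Cx mu eta → eta ≤ nu → Cx S eta

/-- `T` is the counter-shadow of `μ` in `ν`. -/
def IsCounterShadow (mu nu T : Measure ℝ) : Prop :=
  Cx mu T ∧ T ≤ nu ∧ ∀ eta : Measure ℝ, Cx mu eta → eta ≤ nu → Cx eta T

lemma convexOn_affine (A B : ℝ) : ConvexOn ℝ Set.univ (fun x : ℝ => A * x + B) := by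
  refine ⟨convex_univ, fun x _ y _ a b _ _ hab => ?_⟩
  simp only [smul_eq_mul]
  have key : a * (A * x + B) + b * (A * y + B) = A * (a * x + b * y) + (a + b) * B := by ring
  rw [hab, one_mul] at key
  linarith

lemma convexOn_call (k : ℝ) : ConvexOn ℝ Set.univ (fun x : ℝ => max (k - x) 0) := by
  have h := ((convexOn_affine (-1) k).sup (convexOn_const (0:ℝ) convex_univ))
  convert h using 2 with x
  any_goals rfl
  simp only [Pi.sup_apply]
  ring_nf

lemma convexOn_put (k : ℝ) : ConvexOn ℝ Set.univ (fun x : ℝ => max (x - k) 0) := by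
  have h := ((convexOn_affine 1 (-k)).sup (convexOn_const (0:ℝ) convex_univ))
  convert h using 2 with x
  any_goals rfl
  simp only [Pi.sup_apply]
  ring_nf

lemma integrable_call (eta : Measure ℝ) [IsFiniteMeasure eta]
    (h : Integrable (fun x => x) eta) (k : ℝ) :
    Integrable (fun x => max (k - x) 0) eta := by
  refine Integrable.mono' ((integrable_const |k|).add h.abs)
    (((continuous_const.sub continuous_id).max continuous_const).aestronglyMeasurable) ?_
  filter_upwards with x
  simp only [Real.norm_eq_abs, Pi.add_apply]
  rw [abs_of_nonneg (le_max_right _ _)]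
  rcases le_total (k - x) 0 with hh | hh
  · rw [max_eq_right hh]
    have := abs_nonneg x; have := abs_nonneg k; linarith
  · rw [max_eq_left hh]
    have := neg_abs_le x; have := le_abs_self k; linarith

lemma integrable_put (eta : Measure ℝ) [IsFiniteMeasure eta]
    (h : Integrable (fun x => x) eta) (k : ℝ) :
    Integrable (fun x => max (x - k) 0) eta := by
  refine Integrable.mono' ((integrable_const |k|).add h.abs)
    (((continuous_id.sub continuous_const).max continuous_const).aestronglyMeasurable) ?_
  filter_upwards with x
  simp only [Real.norm_eq_abs, Pi.add_apply]
  rw [abs_of_nonneg (le_max_right _ _)]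
  rcases le_total (x - k) 0 with hh | hh
  · rw [max_eq_right hh]
    have := abs_nonneg x; have := abs_nonneg k; linarith
  · rw [max_eq_left hh]
    have := le_abs_self x; have := neg_abs_le k; linarith

lemma integrable_sub_const (eta : Measure ℝ) [IsFiniteMeasure eta]
    (h : Integrable (fun x => x) eta) (k : ℝ) :
    Integrable (fun x : ℝ => k - x) eta := by
  have := (integrable_const (μ := eta) k).sub h
  exact this

lemma pot_parity (eta : Measure ℝ) [IsFiniteMeasure eta]
    (h : Integrable (fun x => x) eta) (k : ℝ) :
    pot eta k = cpot eta k + (eta Set.univ).toReal * k - ∫ x, x ∂eta := by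
  have hpt : ∀ x : ℝ, max (k - x) 0 = max (x - k) 0 + (k - x) := by
    intro x
    rcases le_total x k with hh | hh
    · rw [max_eq_left (by linarith), max_eq_right (by linarith)]; ring
    · rw [max_eq_right (by linarith), max_eq_left (by linarith)]; ring
  have h1 : pot eta k = ∫ x, (max (x - k) 0 + (k - x)) ∂eta := by
    unfold pot; congr 1; ext x; exact hpt x
  rw [h1, integral_add (integrable_put eta h k) (integrable_sub_const eta h k)]
  have h2 : ∫ x, (k - x) ∂eta = (eta Set.univ).toReal * k - ∫ x, x ∂eta := by
    rw [integral_sub (integrable_const k) h, integral_const]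
    simp [smul_eq_mul, mul_comm, measureReal_def]
  rw [h2]
  unfold cpot
  ring

lemma convexOn_pot (eta : Measure ℝ) [IsFiniteMeasure eta]
    (h : Integrable (fun x => x) eta) : ConvexOn ℝ Set.univ (pot eta) := by
  refine ⟨convex_univ, fun x _ y _ a b ha hb hab => ?_⟩
  simp only [smul_eq_mul]
  unfold pot
  have key : ∫ t, max (a * x + b * y - t) 0 ∂eta
      ≤ ∫ t, (a * max (x - t) 0 + b * max (y - t) 0) ∂eta := by
    refine integral_mono (integrable_call eta h _)
      (((integrable_call eta h x).const_mul a).add ((integrable_call eta h y).const_mul b)) ?_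
    intro t
    have h2 := (convexOn_put t).2 (mem_univ x) (mem_univ y) ha hb hab
    simp only [smul_eq_mul] at h2
    calc max (a * x + b * y - t) 0 ≤ a * max (x - t) 0 + b * max (y - t) 0 := h2
      _ = a * max (x - t) 0 + b * max (y - t) 0 := rfl
  calc (∫ t, max (a * x + b * y - t) 0 ∂eta)
      ≤ ∫ t, (a * max (x - t) 0 + b * max (y - t) 0) ∂eta := key
    _ = a * ∫ t, max (x - t) 0 ∂eta + b * ∫ t, max (y - t) 0 ∂eta := by
        rw [integral_add ((integrable_call eta h x).const_mul a)
          ((integrable_call eta h y).const_mul b), integral_const_mul, integral_const_mul]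

lemma tendsto_pot_atBot (eta : Measure ℝ) [IsFiniteMeasure eta]
    (h : Integrable (fun x => x) eta) : Tendsto (pot eta) atBot (nhds 0) := by
  have h0 : (0:ℝ) = ∫ _x, (0:ℝ) ∂eta := by simp
  rw [h0]
  apply tendsto_integral_filter_of_dominated_convergence (fun x => max (0 - x) 0)
  · filter_upwards with k
    exact ((continuous_const.sub continuous_id).max continuous_const).aestronglyMeasurable
  · filter_upwards [eventually_le_atBot (0:ℝ)] with k hk
    filter_upwards with x
    rw [Real.norm_eq_abs, abs_of_nonneg (le_max_right _ _)]
    exact max_le_max (by linarith) le_rfl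
  · exact integrable_call eta h 0
  · filter_upwards with x
    refine Tendsto.congr' ?_ (tendsto_const_nhds (x := (0:ℝ)))
    filter_upwards [eventually_le_atBot x] with k hk
    rw [max_eq_right (by linarith)]

lemma tendsto_cpot_atTop (eta : Measure ℝ) [IsFiniteMeasure eta]
    (h : Integrable (fun x => x) eta) : Tendsto (cpot eta) atTop (nhds 0) := by
  have h0 : (0:ℝ) = ∫ _x, (0:ℝ) ∂eta := by simp
  rw [h0]
  apply tendsto_integral_filter_of_dominated_convergence (fun x => max (x - 0) 0)
  · filter_upwards with k
    exact ((continuous_id.sub continuous_const).max continuous_const).aestronglyMeasurable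
  · filter_upwards [eventually_ge_atTop (0:ℝ)] with k hk
    filter_upwards with x
    rw [Real.norm_eq_abs, abs_of_nonneg (le_max_right _ _)]
    exact max_le_max (by linarith) le_rfl
  · exact integrable_put eta h 0
  · filter_upwards with x
    refine Tendsto.congr' ?_ (tendsto_const_nhds (x := (0:ℝ)))
    filter_upwards [eventually_ge_atTop x] with k hk
    rw [max_eq_right (by linarith)]

lemma integral_restrict_pos (m : Measure ℝ) {s : Set ℝ} (hs : MeasurableSet s)
    (hms : m s ≠ 0) {f : ℝ → ℝ} (hfi : Integrable f (m.restrict s))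
    (hpos : ∀ x ∈ s, 0 < f x) : 0 < ∫ x, f x ∂(m.restrict s) := by
  have hae : 0 ≤ᵐ[m.restrict s] f :=
    (ae_restrict_iff' hs).2 (ae_of_all _ fun x hx => (hpos x hx).le)
  rcases (integral_nonneg_of_ae hae).lt_or_eq with hlt | heq
  · exact hlt
  · exfalso
    have hz : f =ᵐ[m.restrict s] 0 :=
      (integral_eq_zero_iff_of_nonneg_ae hae hfi).1 heq.symm
    have hsub : s ⊆ {x | f x ≠ 0} := fun x hx => (hpos x hx).ne'
    have h1 : (m.restrict s) {x | f x ≠ 0} = 0 := by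
      have := hz
      rw [Filter.EventuallyEq, ae_iff] at this
      simpa using this
    have h2 : (m.restrict s) s = 0 := measure_mono_null hsub h1
    rw [Measure.restrict_apply_self] at h2
    exact hms h2

lemma chord_upper {f : ℝ → ℝ} (hf : ConvexOn ℝ Set.univ f) {a b x : ℝ} (hab : a < b)
    (hx : x ∈ Icc a b) : f x ≤ f a + ((f b - f a) / (b - a)) * (x - a) := by
  have hba : (0:ℝ) < b - a := by linarith
  set t := (b - x) / (b - a) with ht
  have h1 : 0 ≤ t := by apply div_nonneg <;> linarith [hx.2]
  have h2 : 0 ≤ 1 - t := by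
    have : t ≤ 1 := by rw [ht, div_le_one hba]; linarith [hx.1]
    linarith
  have hsum : t + (1 - t) = 1 := by ring
  have hpt : t • a + (1 - t) • b = x := by
    simp only [smul_eq_mul]
    rw [ht]
    field_simp
    ring
  have := hf.2 (mem_univ a) (mem_univ b) h1 h2 hsum
  rw [hpt] at this
  simp only [smul_eq_mul] at this
  calc f x ≤ t * f a + (1 - t) * f b := this
    _ = f a + ((f b - f a) / (b - a)) * (x - a) := by
        rw [ht]; field_simp; ring

lemma chord_lower_left {f : ℝ → ℝ} (hf : ConvexOn ℝ Set.univ f) {a b x : ℝ} (hab : a < b)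
    (hx : x ≤ a) : f a + ((f b - f a) / (b - a)) * (x - a) ≤ f x := by
  have hba : (0:ℝ) < b - a := by linarith
  rcases eq_or_lt_of_le hx with heq | hxa
  · subst heq; simp
  · have hbx : (0:ℝ) < b - x := by linarith
    set t := (b - a) / (b - x) with ht
    have h1 : 0 ≤ t := by apply div_nonneg <;> linarith
    have h2 : 0 ≤ 1 - t := by
      have : t ≤ 1 := by rw [ht, div_le_one hbx]; linarith
      linarith
    have hsum : t + (1 - t) = 1 := by ring
    have hpt : t • x + (1 - t) • b = a := by
      simp only [smul_eq_mul]; rw [ht]; field_simp; ring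
    have key := hf.2 (mem_univ x) (mem_univ b) h1 h2 hsum
    rw [hpt] at key
    simp only [smul_eq_mul] at key
    have ht1 : t * (b - x) = b - a := by rw [ht]; field_simp
    have key2 : f a * (b - x) ≤ (b - a) * f x + (a - x) * f b := by
      have h3 := mul_le_mul_of_nonneg_right key hbx.le
      calc f a * (b - x) ≤ (t * f x + (1 - t) * f b) * (b - x) := h3
        _ = (t * (b - x)) * f x + ((b - x) - t * (b - x)) * f b := by ring
        _ = (b - a) * f x + (a - x) * f b := by rw [ht1]; ring
    have goal2 : f a * (b - a) + (f b - f a) * (x - a) ≤ f x * (b - a) := by nlinarith [key2]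
    rw [← sub_nonneg]
    have h4 : f x - (f a + (f b - f a) / (b - a) * (x - a))
        = (f x * (b - a) - (f a * (b - a) + (f b - f a) * (x - a))) / (b - a) := by
      field_simp
      try ring
    rw [h4]
    apply div_nonneg _ hba.le
    linarith

lemma chord_lower_right {f : ℝ → ℝ} (hf : ConvexOn ℝ Set.univ f) {a b x : ℝ} (hab : a < b)
    (hx : b ≤ x) : f a + ((f b - f a) / (b - a)) * (x - a) ≤ f x := by
  have hba : (0:ℝ) < b - a := by linarith
  rcases eq_or_lt_of_le hx with heq | hbx
  · subst heq
    rw [← sub_nonneg]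
    have h4 : f b - (f a + (f b - f a) / (b - a) * (b - a)) = 0 := by field_simp; ring
    rw [h4]
  · have hxa : (0:ℝ) < x - a := by linarith
    set t := (x - b) / (x - a) with ht
    have h1 : 0 ≤ t := by apply div_nonneg <;> linarith
    have h2 : 0 ≤ 1 - t := by
      have : t ≤ 1 := by rw [ht, div_le_one hxa]; linarith
      linarith
    have hsum : t + (1 - t) = 1 := by ring
    have hpt : t • a + (1 - t) • x = b := by
      simp only [smul_eq_mul]; rw [ht]; field_simp; ring
    have key := hf.2 (mem_univ a) (mem_univ x) h1 h2 hsum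
    rw [hpt] at key
    simp only [smul_eq_mul] at key
    have ht1 : t * (x - a) = x - b := by rw [ht]; field_simp
    have key2 : f b * (x - a) ≤ (x - b) * f a + (b - a) * f x := by
      have h3 := mul_le_mul_of_nonneg_right key hxa.le
      calc f b * (x - a) ≤ (t * f a + (1 - t) * f x) * (x - a) := h3
        _ = (t * (x - a)) * f a + ((x - a) - t * (x - a)) * f x := by ring
        _ = (x - b) * f a + (b - a) * f x := by rw [ht1]; ring
    have goal2 : f a * (b - a) + (f b - f a) * (x - a) ≤ f x * (b - a) := by nlinarith [key2]
    rw [← sub_nonneg]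
    have h4 : f x - (f a + (f b - f a) / (b - a) * (x - a))
        = (f x * (b - a) - (f a * (b - a) + (f b - f a) * (x - a))) / (b - a) := by
      field_simp
      try ring
    rw [h4]
    apply div_nonneg _ hba.le
    linarith


lemma integrable_affine (m : Measure ℝ) [IsFiniteMeasure m]
    (h : Integrable (fun x => x) m) (A B : ℝ) :
    Integrable (fun x : ℝ => A * x + B) m := by
  have := (h.const_mul A).add (integrable_const (μ := m) B)
  simpa using this

lemma integrable_id_sub_const (m : Measure ℝ) [IsFiniteMeasure m]
    (h : Integrable (fun x => x) m) (a : ℝ) : Integrable (fun x : ℝ => x - a) m := by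
  have := h.sub (integrable_const (μ := m) a)
  exact this

lemma integral_affine (m : Measure ℝ) [IsFiniteMeasure m]
    (h : Integrable (fun x => x) m) (A B : ℝ) :
    ∫ x, (A * x + B) ∂m = A * (∫ x, x ∂m) + B * (m Set.univ).toReal := by
  have h1 : Integrable (fun x : ℝ => A * x) m := h.const_mul A
  rw [integral_add h1 (integrable_const B), integral_const_mul, integral_const]
  simp [smul_eq_mul, mul_comm, measureReal_def]

set_option maxHeartbeats 2000000 in
lemma sweep_null (mu nu T : Measure ℝ) [IsFiniteMeasure mu] [IsFiniteMeasure nu]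
    (hintm : Integrable (fun x => x) mu) (hintn : Integrable (fun x => x) nu)
    (hT : IsCounterShadow mu nu T) {x0 a b : ℝ} (hax : a < x0) (hxb : x0 < b)
    (hwm : (nu - T) (Iic a) ≠ 0) (hwp : (nu - T) (Ici b) ≠ 0) :
    T (Ioo a b) = 0 := by
  obtain ⟨hCxT, hTle, hMax⟩ := hT
  haveI : IsFiniteMeasure T := isFiniteMeasure_of_le nu hTle
  by_contra h0
  set σ : Measure ℝ := nu - T with hσ
  haveI : IsFiniteMeasure σ := isFiniteMeasure_of_le nu Measure.sub_le
  have hσsum : σ + T = nu := Measure.sub_add_cancel_of_le hTle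
  have hintT : Integrable (fun x => x) T := hintn.mono_measure hTle
  have hintσ : Integrable (fun x => x) σ := hintn.mono_measure Measure.sub_le
  set ρ0 := T.restrict (Ioo a b) with hρ0
  set τm := σ.restrict (Iic a) with hτm
  set τp := σ.restrict (Ici b) with hτp
  set w0 := (T (Ioo a b)).toReal with hw0
  set wm := (σ (Iic a)).toReal with hwmdef
  set wp := (σ (Ici b)).toReal with hwpdef
  have w0pos : 0 < w0 := ENNReal.toReal_pos h0 (measure_ne_top T _)
  have wmpos : 0 < wm := ENNReal.toReal_pos hwm (measure_ne_top σ _)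
  have wppos : 0 < wp := ENNReal.toReal_pos hwp (measure_ne_top σ _)
  set m0 := ∫ x, x ∂ρ0 with hm0
  set Mm := ∫ x, x ∂τm with hMm
  set Mp := ∫ x, x ∂τp with hMp
  have hρ0univ : (ρ0 Set.univ).toReal = w0 := by
    rw [hρ0, Measure.restrict_apply_univ]
  have hτmuniv : (τm Set.univ).toReal = wm := by
    rw [hτm, Measure.restrict_apply_univ]
  have hτpuniv : (τp Set.univ).toReal = wp := by
    rw [hτp, Measure.restrict_apply_univ]
  -- strict bounds for m0
  have ham0 : a * w0 < m0 := by
    have hpos : 0 < ∫ x, (x - a) ∂ρ0 := by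
      apply integral_restrict_pos T measurableSet_Ioo h0
        (integrable_id_sub_const T hintT a).restrict
      intro x hx; exact sub_pos.2 hx.1
    have : ∫ x, (x - a) ∂ρ0 = m0 - a * w0 := by
      rw [integral_sub hintT.restrict (integrable_const a), integral_const, measureReal_def, hρ0univ]
      simp [smul_eq_mul, mul_comm, hm0, hρ0]
    linarith [this ▸ hpos]
  have hbm0 : m0 < b * w0 := by
    have hpos : 0 < ∫ x, (b - x) ∂ρ0 := by
      apply integral_restrict_pos T measurableSet_Ioo h0
        (integrable_sub_const T hintT b).restrict
      intro x hx; exact sub_pos.2 hx.2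
    have : ∫ x, (b - x) ∂ρ0 = b * w0 - m0 := by
      rw [integral_sub (integrable_const b) hintT.restrict, integral_const, measureReal_def, hρ0univ]
      simp [smul_eq_mul, mul_comm, hm0, hρ0]
    linarith [this ▸ hpos]
  have hMmle : Mm ≤ a * wm := by
    have : ∫ x, x ∂τm ≤ ∫ _x, a ∂τm := by
      apply integral_mono_ae hintσ.restrict (integrable_const a)
      exact (ae_restrict_iff' measurableSet_Iic).2 (ae_of_all _ fun x hx => hx)
    rwa [integral_const, measureReal_def, hτmuniv, smul_eq_mul, mul_comm] at this
  have hMple : b * wp ≤ Mp := by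
    have : ∫ _x, b ∂τp ≤ ∫ x, x ∂τp := by
      apply integral_mono_ae (integrable_const b) hintσ.restrict
      exact (ae_restrict_iff' measurableSet_Ici).2 (ae_of_all _ fun x hx => hx)
    rwa [integral_const, measureReal_def, hτpuniv, smul_eq_mul, mul_comm] at this
  -- barycenters
  set am := Mm / wm with ham
  set ap := Mp / wp with hap
  set a0 := m0 / w0 with ha0
  have ham_le : am ≤ a := by rw [ham, div_le_iff₀ wmpos]; linarith
  have hap_ge : b ≤ ap := by rw [hap, le_div_iff₀ wppos]; linarith
  have ha0_gt : a < a0 := by rw [ha0, lt_div_iff₀ w0pos]; linarith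
  have ha0_lt : a0 < b := by rw [ha0, div_lt_iff₀ w0pos]; linarith
  have hden : 0 < ap - am := by linarith
  set eps := min 1 (min (wm / w0) (wp / w0)) with heps
  have hepspos : 0 < eps := by
    apply lt_min one_pos
    exact lt_min (div_pos wmpos w0pos) (div_pos wppos w0pos)
  have hepsle1 : eps ≤ 1 := min_le_left _ _
  have hepswm : eps * w0 ≤ wm := by
    have h1 : eps ≤ wm / w0 := le_trans (min_le_right _ _) (min_le_left _ _)
    calc eps * w0 ≤ (wm / w0) * w0 := by nlinarith
      _ = wm := by field_simp
  have hepswp : eps * w0 ≤ wp := by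
    have h1 : eps ≤ wp / w0 := le_trans (min_le_right _ _) (min_le_right _ _)
    calc eps * w0 ≤ (wp / w0) * w0 := by nlinarith
      _ = wp := by field_simp
  set p := eps * w0 * ((ap - a0) / (ap - am)) with hp
  set q := eps * w0 * ((a0 - am) / (ap - am)) with hq
  have hppos : 0 < p := by
    apply mul_pos (by positivity)
    apply div_pos (by linarith) hden
  have hqpos : 0 < q := by
    apply mul_pos (by positivity)
    apply div_pos (by linarith) hden
  have hpq : p + q = eps * w0 := by
    rw [hp, hq]
    field_simp
    ring
  have hmean : p * am + q * ap = eps * m0 := by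
    rw [hp, hq]
    have hm0' : m0 = a0 * w0 := by rw [ha0]; field_simp
    rw [hm0']
    field_simp
    ring
  have hple : p ≤ wm := by
    have h1 : (ap - a0) / (ap - am) ≤ 1 := by
      rw [div_le_one hden]; linarith
    calc p ≤ eps * w0 * 1 := by
          rw [hp]; apply mul_le_mul_of_nonneg_left h1 (by positivity)
      _ = eps * w0 := by ring
      _ ≤ wm := hepswm
  have hqle : q ≤ wp := by
    have h1 : (a0 - am) / (ap - am) ≤ 1 := by
      rw [div_le_one hden]; linarith
    calc q ≤ eps * w0 * 1 := by
          rw [hq]; apply mul_le_mul_of_nonneg_left h1 (by positivity)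
      _ = eps * w0 := by ring
      _ ≤ wp := hepswp
  set cm := p / wm with hcm
  set cp := q / wp with hcp
  have hcmpos : 0 < cm := div_pos hppos wmpos
  have hcppos : 0 < cp := div_pos hqpos wppos
  have hcmle1 : cm ≤ 1 := by rw [hcm, div_le_one wmpos]; exact hple
  have hcple1 : cp ≤ 1 := by rw [hcp, div_le_one wppos]; exact hqle
  -- the competitor measure
  set eta : Measure ℝ := T.restrict (Ioo a b)ᶜ + (ENNReal.ofReal (1 - eps)) • ρ0
      + (ENNReal.ofReal cm) • τm + (ENNReal.ofReal cp) • τp with heta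
  have hetale : eta ≤ nu := by
    rw [Measure.le_iff]
    intro s hs
    have hνs : nu s = σ s + T s := by
      conv_lhs => rw [← hσsum]
      simp [Measure.add_apply]
    have h1 : eta s = T (s ∩ (Ioo a b)ᶜ) + ENNReal.ofReal (1 - eps) * T (s ∩ Ioo a b)
        + ENNReal.ofReal cm * σ (s ∩ Iic a) + ENNReal.ofReal cp * σ (s ∩ Ici b) := by
      rw [heta]
      simp [Measure.add_apply, Measure.smul_apply, Measure.restrict_apply hs, smul_eq_mul,
        hρ0, hτm, hτp]
    rw [h1, hνs]
    have h2 : ENNReal.ofReal (1 - eps) * T (s ∩ Ioo a b) ≤ T (s ∩ Ioo a b) := by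
      calc ENNReal.ofReal (1 - eps) * T (s ∩ Ioo a b)
          ≤ 1 * T (s ∩ Ioo a b) := by
            apply mul_le_mul_left
            exact ENNReal.ofReal_le_one.2 (by linarith)
        _ = T (s ∩ Ioo a b) := one_mul _
    have h3 : ENNReal.ofReal cm * σ (s ∩ Iic a) ≤ σ (s ∩ Iic a) := by
      calc ENNReal.ofReal cm * σ (s ∩ Iic a) ≤ 1 * σ (s ∩ Iic a) := by
            apply mul_le_mul_left
            exact ENNReal.ofReal_le_one.2 hcmle1
        _ = _ := one_mul _
    have h4 : ENNReal.ofReal cp * σ (s ∩ Ici b) ≤ σ (s ∩ Ici b) := by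
      calc ENNReal.ofReal cp * σ (s ∩ Ici b) ≤ 1 * σ (s ∩ Ici b) := by
            apply mul_le_mul_left
            exact ENNReal.ofReal_le_one.2 hcple1
        _ = _ := one_mul _
    have h5 : T (s ∩ (Ioo a b)ᶜ) + T (s ∩ Ioo a b) = T s := by
      rw [← Set.diff_eq]
      rw [add_comm]
      exact measure_inter_add_diff s measurableSet_Ioo
    have h6 : σ (s ∩ Iic a) + σ (s ∩ Ici b) ≤ σ s := by
      have hdisj : Disjoint (s ∩ Iic a) (s ∩ Ici b) := by
        apply Disjoint.mono inter_subset_right inter_subset_right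
        rw [Set.disjoint_left]
        intro x hx1 hx2
        simp only [mem_Iic, mem_Ici] at hx1 hx2
        linarith
      rw [← measure_union hdisj (hs.inter measurableSet_Ici)]
      apply measure_mono
      exact union_subset inter_subset_left inter_subset_left
    calc T (s ∩ (Ioo a b)ᶜ) + ENNReal.ofReal (1 - eps) * T (s ∩ Ioo a b)
        + ENNReal.ofReal cm * σ (s ∩ Iic a) + ENNReal.ofReal cp * σ (s ∩ Ici b)
        ≤ T (s ∩ (Ioo a b)ᶜ) + T (s ∩ Ioo a b) + σ (s ∩ Iic a) + σ (s ∩ Ici b) := by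
          gcongr
      _ = T s + (σ (s ∩ Iic a) + σ (s ∩ Ici b)) := by rw [h5]; ring
      _ ≤ T s + σ s := by gcongr
      _ = σ s + T s := by ring
  haveI : IsFiniteMeasure eta := isFiniteMeasure_of_le nu hetale
  have hint_eta : Integrable (fun x => x) eta := hintn.mono_measure hetale
  have hA_le : T.restrict (Ioo a b)ᶜ ≤ eta := by
    rw [heta]; exact Measure.le_add_right (Measure.le_add_right (Measure.le_add_right le_rfl))
  have hC_le : (ENNReal.ofReal cm) • τm ≤ eta := by
    rw [heta]; exact Measure.le_add_right (Measure.le_add_left le_rfl)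
  have hD_le : (ENNReal.ofReal cp) • τp ≤ eta := by
    rw [heta]; exact Measure.le_add_left le_rfl
  have hcmne : ENNReal.ofReal cm ≠ 0 := by
    simp only [ne_eq, ENNReal.ofReal_eq_zero, not_le]; exact hcmpos
  have hcpne : ENNReal.ofReal cp ≠ 0 := by
    simp only [ne_eq, ENNReal.ofReal_eq_zero, not_le]; exact hcppos
  -- integral decomposition over eta
  have hdecomp : ∀ f : ℝ → ℝ, Continuous f → Integrable f eta →
      Integrable f T ∧ Integrable f ρ0 ∧ Integrable f τm ∧ Integrable f τp ∧
      ∫ x, f x ∂eta = ∫ x, f x ∂T - eps * ∫ x, f x ∂ρ0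
        + cm * ∫ x, f x ∂τm + cp * ∫ x, f x ∂τp := by
    intro f hfc hfeta
    have hfρ0 : Integrable f ρ0 := by
      obtain ⟨Mb, hMb⟩ := (isCompact_Icc (a := a) (b := b)).exists_bound_of_continuousOn
        hfc.continuousOn
      refine Integrable.mono' (integrable_const Mb) hfc.aestronglyMeasurable ?_
      rw [hρ0]
      refine (ae_restrict_iff' measurableSet_Ioo).2 (ae_of_all _ fun x hx => ?_)
      exact hMb x (Ioo_subset_Icc_self hx)
    have hfA : Integrable f (T.restrict (Ioo a b)ᶜ) := hfeta.mono_measure hA_le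
    have hfT : Integrable f T := by
      rw [← Measure.restrict_add_restrict_compl (μ := T) (s := Ioo a b) measurableSet_Ioo]
      exact (integrable_add_measure).2 ⟨hfρ0, hfA⟩
    have hfτm : Integrable f τm := by
      have h1 : Integrable f (ENNReal.ofReal cm • τm) := hfeta.mono_measure hC_le
      exact (integrable_smul_measure hcmne ENNReal.ofReal_ne_top).1 h1
    have hfτp : Integrable f τp := by
      have h1 : Integrable f (ENNReal.ofReal cp • τp) := hfeta.mono_measure hD_le
      exact (integrable_smul_measure hcpne ENNReal.ofReal_ne_top).1 h1
    refine ⟨hfT, hfρ0, hfτm, hfτp, ?_⟩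
    have hfB : Integrable f ((ENNReal.ofReal (1 - eps)) • ρ0) :=
      hfρ0.smul_measure ENNReal.ofReal_ne_top
    have hfC : Integrable f ((ENNReal.ofReal cm) • τm) :=
      hfτm.smul_measure ENNReal.ofReal_ne_top
    have hfD : Integrable f ((ENNReal.ofReal cp) • τp) :=
      hfτp.smul_measure ENNReal.ofReal_ne_top
    have e1 : ∫ x, f x ∂eta
        = ∫ x, f x ∂(T.restrict (Ioo a b)ᶜ) + (1 - eps) * ∫ x, f x ∂ρ0
          + cm * ∫ x, f x ∂τm + cp * ∫ x, f x ∂τp := by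
      rw [heta]
      rw [integral_add_measure (integrable_add_measure.2
          ⟨integrable_add_measure.2 ⟨hfA, hfB⟩, hfC⟩) hfD,
        integral_add_measure (integrable_add_measure.2 ⟨hfA, hfB⟩) hfC,
        integral_add_measure hfA hfB,
        integral_smul_measure, integral_smul_measure, integral_smul_measure]
      rw [ENNReal.toReal_ofReal (by linarith), ENNReal.toReal_ofReal hcmpos.le,
        ENNReal.toReal_ofReal hcppos.le]
      simp [smul_eq_mul]
    have e2 : ∫ x, f x ∂T = ∫ x, f x ∂ρ0 + ∫ x, f x ∂(T.restrict (Ioo a b)ᶜ) := by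
      conv_lhs => rw [← Measure.restrict_add_restrict_compl (μ := T) (s := Ioo a b)
        measurableSet_Ioo]
      exact integral_add_measure hfρ0 hfA
    rw [e1, e2]; ring
  -- chord bounds
  have hchord : ∀ f : ℝ → ℝ, ConvexOn ℝ Set.univ f → Integrable f τm → Integrable f τp →
      Integrable f ρ0 →
      (∫ x, f x ∂ρ0 ≤ (f b - f a) / (b - a) * m0 + (f a - (f b - f a) / (b - a) * a) * w0) ∧
      (eps * ((f b - f a) / (b - a) * m0 + (f a - (f b - f a) / (b - a) * a) * w0)
        ≤ cm * ∫ x, f x ∂τm + cp * ∫ x, f x ∂τp) := by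
    intro f hf hfτm hfτp hfρ0
    have hab : a < b := lt_trans hax hxb
    set κ := (f b - f a) / (b - a) with hκ
    set C0 := f a - κ * a with hC0
    have hLρ0 : Integrable (fun x : ℝ => κ * x + C0) ρ0 := integrable_affine _ hintT.restrict κ C0
    have hLτm : Integrable (fun x : ℝ => κ * x + C0) τm := integrable_affine _ hintσ.restrict κ C0
    have hLτp : Integrable (fun x : ℝ => κ * x + C0) τp := integrable_affine _ hintσ.restrict κ C0
    have hIL0 : ∫ x, (κ * x + C0) ∂ρ0 = κ * m0 + C0 * w0 := by
      rw [integral_affine _ hintT.restrict κ C0, hρ0univ, hm0]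
    have hILm : ∫ x, (κ * x + C0) ∂τm = κ * Mm + C0 * wm := by
      rw [integral_affine _ hintσ.restrict κ C0, hτmuniv, hMm]
    have hILp : ∫ x, (κ * x + C0) ∂τp = κ * Mp + C0 * wp := by
      rw [integral_affine _ hintσ.restrict κ C0, hτpuniv, hMp]
    constructor
    · have hmono : ∫ x, f x ∂ρ0 ≤ ∫ x, (κ * x + C0) ∂ρ0 := by
        apply integral_mono_ae hfρ0 hLρ0
        rw [hρ0]
        refine (ae_restrict_iff' measurableSet_Ioo).2 (ae_of_all _ fun x hx => ?_)
        calc f x ≤ f a + ((f b - f a) / (b - a)) * (x - a) :=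
              chord_upper hf hab (Ioo_subset_Icc_self hx)
          _ = κ * x + C0 := by rw [hκ, hC0]; ring
      rw [hIL0] at hmono
      calc ∫ x, f x ∂ρ0 ≤ κ * m0 + C0 * w0 := hmono
        _ = (f b - f a) / (b - a) * m0 + (f a - (f b - f a) / (b - a) * a) * w0 := by
            rw [hκ, hC0]
    · have hm1 : ∫ x, (κ * x + C0) ∂τm ≤ ∫ x, f x ∂τm := by
        apply integral_mono_ae hLτm hfτm
        rw [hτm]
        refine (ae_restrict_iff' measurableSet_Iic).2 (ae_of_all _ fun x hx => ?_)
        calc κ * x + C0 = f a + ((f b - f a) / (b - a)) * (x - a) := by rw [hκ, hC0]; ring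
          _ ≤ f x := chord_lower_left hf hab hx
      have hp1 : ∫ x, (κ * x + C0) ∂τp ≤ ∫ x, f x ∂τp := by
        apply integral_mono_ae hLτp hfτp
        rw [hτp]
        refine (ae_restrict_iff' measurableSet_Ici).2 (ae_of_all _ fun x hx => ?_)
        calc κ * x + C0 = f a + ((f b - f a) / (b - a)) * (x - a) := by rw [hκ, hC0]; ring
          _ ≤ f x := chord_lower_right hf hab hx
      rw [hILm] at hm1; rw [hILp] at hp1
      have e1 : cm * wm = p := by rw [hcm]; exact div_mul_cancel₀ p wmpos.ne'
      have e2 : cm * Mm = p * am := by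
        rw [hcm, ham, div_mul_eq_mul_div, mul_div_assoc]
      have e3 : cp * wp = q := by rw [hcp]; exact div_mul_cancel₀ q wppos.ne'
      have e4 : cp * Mp = q * ap := by
        rw [hcp, hap, div_mul_eq_mul_div, mul_div_assoc]
      calc eps * ((f b - f a) / (b - a) * m0 + (f a - (f b - f a) / (b - a) * a) * w0)
          = eps * (κ * m0 + C0 * w0) := by rw [hκ, hC0]
        _ = κ * (eps * m0) + C0 * (eps * w0) := by ring
        _ = κ * (p * am + q * ap) + C0 * (p + q) := by rw [hmean, hpq]
        _ = κ * (cm * Mm + cp * Mp) + C0 * (cm * wm + cp * wp) := by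
            rw [e1, e2, e3, e4]
        _ = cm * (κ * Mm + C0 * wm) + cp * (κ * Mp + C0 * wp) := by ring
        _ ≤ cm * ∫ x, f x ∂τm + cp * ∫ x, f x ∂τp := by
            apply add_le_add
            · exact mul_le_mul_of_nonneg_left hm1 hcmpos.le
            · exact mul_le_mul_of_nonneg_left hp1 hcppos.le
  -- mu ≼cx eta
  have hCxmueta : Cx mu eta := by
    intro f hf hfmu hfeta
    have hfc : Continuous f := continuousOn_univ.1 (hf.continuousOn isOpen_univ)
    obtain ⟨hfT, hfρ0, hfτm, hfτp, hdec⟩ := hdecomp f hfc hfeta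
    obtain ⟨hb1, hb2⟩ := hchord f hf hfτm hfτp hfρ0
    have h1 : ∫ x, f x ∂mu ≤ ∫ x, f x ∂T := hCxT f hf hfmu hfT
    have h2 : eps * ∫ x, f x ∂ρ0 ≤ cm * ∫ x, f x ∂τm + cp * ∫ x, f x ∂τp := by
      calc eps * ∫ x, f x ∂ρ0
          ≤ eps * ((f b - f a) / (b - a) * m0 + (f a - (f b - f a) / (b - a) * a) * w0) :=
            mul_le_mul_of_nonneg_left hb1 hepspos.le
        _ ≤ _ := hb2
    linarith [h1, h2, hdec]
  have hCxetaT : Cx eta T := hMax eta hCxmueta hetale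
  -- the call function at x0
  set g : ℝ → ℝ := fun t => max (x0 - t) 0 with hgdef
  have hgconv : ConvexOn ℝ Set.univ g := convexOn_call x0
  have hgc : Continuous g := (continuous_const.sub continuous_id).max continuous_const
  have hgeta : Integrable g eta := integrable_call eta hint_eta x0
  have hgT2 : Integrable g T := integrable_call T hintT x0
  have hle : ∫ x, g x ∂eta ≤ ∫ x, g x ∂T := hCxetaT g hgconv hgeta hgT2
  obtain ⟨_, hgρ0, hgτm, hgτp, hgdec⟩ := hdecomp g hgc hgeta
  obtain ⟨_, hgb2⟩ := hchord g hgconv hgτm hgτp hgρ0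
  have hga : g a = x0 - a := max_eq_left (by linarith)
  have hgbv : g b = 0 := max_eq_right (by linarith)
  have hab : a < b := lt_trans hax hxb
  have hba : (0:ℝ) < b - a := by linarith
  have hLint : Integrable (fun x : ℝ => (g b - g a) / (b - a) * x
      + (g a - (g b - g a) / (b - a) * a)) ρ0 :=
    integrable_affine _ hintT.restrict _ _
  have hstrict : ∫ x, g x ∂ρ0
      < (g b - g a) / (b - a) * m0 + (g a - (g b - g a) / (b - a) * a) * w0 := by
    have hpos : 0 < ∫ x, ((g b - g a) / (b - a) * x
        + (g a - (g b - g a) / (b - a) * a) - g x) ∂ρ0 := by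
      apply integral_restrict_pos T measurableSet_Ioo h0
      · have h1 := hLint.sub hgρ0
        exact h1
      · intro x hx
        rw [hga, hgbv]
        rcases le_or_gt x0 x with hcase | hcase
        · have hgx : g x = 0 := max_eq_right (by linarith)
          rw [hgx]
          have key : (0 - (x0 - a)) / (b - a) * x + ((x0 - a) - (0 - (x0 - a)) / (b - a) * a)
              - 0 = (x0 - a) * (b - x) / (b - a) := by
            field_simp; ring
          rw [key]
          exact div_pos (mul_pos (by linarith) (by linarith [hx.2])) hba
        · have hgx : g x = x0 - x := max_eq_left (by linarith)
          rw [hgx]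
          have key : (0 - (x0 - a)) / (b - a) * x + ((x0 - a) - (0 - (x0 - a)) / (b - a) * a)
              - (x0 - x) = (x - a) * (b - x0) / (b - a) := by
            field_simp; ring
          rw [key]
          exact div_pos (mul_pos (by linarith [hx.1]) (by linarith)) hba
    have heq : ∫ x, ((g b - g a) / (b - a) * x + (g a - (g b - g a) / (b - a) * a) - g x) ∂ρ0
        = ((g b - g a) / (b - a) * m0 + (g a - (g b - g a) / (b - a) * a) * w0)
          - ∫ x, g x ∂ρ0 := by
      rw [integral_sub hLint hgρ0, integral_affine _ hintT.restrict _ _, hρ0univ, hm0]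
    linarith [heq ▸ hpos]
  have hmul : eps * ∫ x, g x ∂ρ0
      < eps * ((g b - g a) / (b - a) * m0 + (g a - (g b - g a) / (b - a) * a) * w0) :=
    mul_lt_mul_of_pos_left hstrict hepspos
  linarith [hle, hgdec, hgb2, hmul]


set_option maxHeartbeats 2000000 in
theorem stmt15' (mu nu : Measure ℝ) [IsFiniteMeasure mu] [IsFiniteMeasure nu]
    (hintm : Integrable (fun x => x) mu) (hintn : Integrable (fun x => x) nu)
    (T : Measure ℝ) (c : ℝ → ℝ)
    (hT : IsCounterShadow mu nu T)
    (hcconv : ConvexOn ℝ Set.univ c)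
    (hcle : ∀ x, c x ≤ min (pot nu x) (cpot nu x + (mu Set.univ).toReal * x - ∫ y, y ∂mu))
    (hcmax : ∀ g : ℝ → ℝ, ConvexOn ℝ Set.univ g →
      (∀ x, g x ≤ min (pot nu x) (cpot nu x + (mu Set.univ).toReal * x - ∫ y, y ∂mu)) →
      ∀ x, g x ≤ c x) :
    ∀ k, pot T k = c k := by
  obtain ⟨hCxT, hTle, hMax⟩ := hT
  haveI : IsFiniteMeasure T := isFiniteMeasure_of_le nu hTle
  haveI : IsFiniteMeasure (nu - T) := isFiniteMeasure_of_le nu Measure.sub_le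
  have hintT : Integrable (fun x => x) T := hintn.mono_measure hTle
  have hintσ : Integrable (fun x => x) (nu - T) := hintn.mono_measure Measure.sub_le
  have hσsum : (nu - T) + T = nu := Measure.sub_add_cancel_of_le hTle
  -- mass and mean of T agree with mu
  have hmass : (T Set.univ).toReal = (mu Set.univ).toReal := by
    have h1 := hCxT (fun _ => (1:ℝ)) (convexOn_const 1 convex_univ)
      (integrable_const 1) (integrable_const 1)
    have h2 := hCxT (fun _ => (-1:ℝ)) (convexOn_const (-1) convex_univ)
      (integrable_const _) (integrable_const _)
    simp only [integral_const, measureReal_def, smul_eq_mul, mul_one, mul_neg] at h1 h2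
    linarith
  have hmean : ∫ x, x ∂T = ∫ x, x ∂mu := by
    have hcid : ConvexOn ℝ Set.univ (fun x : ℝ => x) := by
      have := convexOn_affine 1 0; simpa using this
    have hcnid : ConvexOn ℝ Set.univ (fun x : ℝ => -x) := by
      have := convexOn_affine (-1) 0; simpa using this
    have hintmneg : Integrable (fun x : ℝ => -x) mu := hintm.neg
    have hintTneg : Integrable (fun x : ℝ => -x) T := hintT.neg
    have h1 := hCxT (fun x => x) hcid hintm hintT
    have h2 := hCxT (fun x => -x) hcnid hintmneg hintTneg
    rw [integral_neg, integral_neg] at h2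
    linarith
  -- parity for T, with mu's mass and mean
  have hTpar : ∀ k, pot T k = cpot T k + (mu Set.univ).toReal * k - ∫ x, x ∂mu := by
    intro k
    rw [pot_parity T hintT k, hmass, hmean]
  -- Part 1 : pot T ≤ c
  have hpotTle : ∀ k, pot T k ≤ pot nu k := fun k =>
    integral_mono_measure hTle (ae_of_all _ fun x => le_max_right _ _)
      (integrable_call nu hintn k)
  have hcpotTle : ∀ k, cpot T k ≤ cpot nu k := fun k =>
    integral_mono_measure hTle (ae_of_all _ fun x => le_max_right _ _)
      (integrable_put nu hintn k)
  have hMlec : ∀ k, pot T k ≤ c k := by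
    apply hcmax _ (convexOn_pot T hintT)
    intro k
    refine le_min (hpotTle k) ?_
    rw [hTpar k]
    have := hcpotTle k
    linarith
  -- comparison with mu potentials
  have hpotmuT : ∀ k, pot mu k ≤ pot T k := fun k =>
    hCxT _ (convexOn_call k) (integrable_call mu hintm k) (integrable_call T hintT k)
  have hcpotmuT : ∀ k, cpot mu k ≤ cpot T k := fun k =>
    hCxT _ (convexOn_put k) (integrable_put mu hintm k) (integrable_put T hintT k)
  -- bounds on the gap D := c - pot T
  have hDbot : ∀ k, c k - pot T k ≤ pot nu k - pot mu k := by
    intro k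
    have h1 : c k ≤ pot nu k := (hcle k).trans (min_le_left _ _)
    have h2 := hpotmuT k
    linarith
  have hDtop : ∀ k, c k - pot T k ≤ cpot nu k - cpot mu k := by
    intro k
    have h1 : c k ≤ cpot nu k + (mu Set.univ).toReal * k - ∫ x, x ∂mu :=
      (hcle k).trans (min_le_right _ _)
    have h2 := hcpotmuT k
    have h3 := hTpar k
    linarith
  have hDnn : ∀ k, 0 ≤ c k - pot T k := fun k => by linarith [hMlec k]
  -- continuity
  have hMcont : Continuous (pot T) :=
    continuousOn_univ.1 ((convexOn_pot T hintT).continuousOn isOpen_univ)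
  have hccont : Continuous c :=
    continuousOn_univ.1 (hcconv.continuousOn isOpen_univ)
  have htB : Tendsto (fun k => pot nu k - pot mu k) atBot (nhds 0) := by
    have := (tendsto_pot_atBot nu hintn).sub (tendsto_pot_atBot mu hintm)
    simpa using this
  have htT : Tendsto (fun k => cpot nu k - cpot mu k) atTop (nhds 0) := by
    have := (tendsto_cpot_atTop nu hintn).sub (tendsto_cpot_atTop mu hintm)
    simpa using this
  -- main argument
  intro k0
  by_contra hne
  have hlt : pot T k0 < c k0 := (hMlec k0).lt_of_ne hne
  set ε := (c k0 - pot T k0) / 2 with hεdef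
  have hεpos : 0 < ε := by rw [hεdef]; linarith
  set A := {x | x ≤ k0 ∧ c x - pot T x ≤ ε} with hA
  set B := {x | k0 ≤ x ∧ c x - pot T x ≤ ε} with hB
  have hA_closed : IsClosed A := by
    have : A = Iic k0 ∩ (fun x => c x - pot T x) ⁻¹' (Iic ε) := by
      ext x; simp [hA, mem_Iic]
    rw [this]
    exact isClosed_Iic.inter (IsClosed.preimage (hccont.sub hMcont) isClosed_Iic)
  have hB_closed : IsClosed B := by
    have : B = Ici k0 ∩ (fun x => c x - pot T x) ⁻¹' (Iic ε) := by
      ext x; simp [hB, mem_Ici, mem_Iic]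
    rw [this]
    exact isClosed_Ici.inter (IsClosed.preimage (hccont.sub hMcont) isClosed_Iic)
  have hA_ne : A.Nonempty := by
    obtain ⟨x, hx1, hx2⟩ := ((htB.eventually_lt_const hεpos).and (eventually_le_atBot k0)).exists
    exact ⟨x, hx2, by linarith [hDbot x]⟩
  have hB_ne : B.Nonempty := by
    obtain ⟨x, hx1, hx2⟩ := ((htT.eventually_lt_const hεpos).and (eventually_ge_atTop k0)).exists
    exact ⟨x, hx2, by linarith [hDtop x]⟩
  have hA_bdd : BddAbove A := ⟨k0, fun x hx => hx.1⟩
  have hB_bdd : BddBelow B := ⟨k0, fun x hx => hx.1⟩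
  set u := sSup A with hu
  set v := sInf B with hv
  have huA : u ∈ A := hA_closed.csSup_mem hA_ne hA_bdd
  have hvB : v ∈ B := hB_closed.csInf_mem hB_ne hB_bdd
  have huk : u < k0 := by
    rcases lt_or_eq_of_le (huA.1) with h | h
    · exact h
    · exfalso
      have := huA.2
      rw [h] at this
      rw [hεdef] at this
      linarith
  have hkv : k0 < v := by
    rcases lt_or_eq_of_le (hvB.1) with h | h
    · exact h
    · exfalso
      have := hvB.2
      rw [← h] at this
      rw [hεdef] at this
      linarith
  have hDmid : ∀ x ∈ Ioo u v, pot T x < c x := by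
    intro x hx
    by_contra hge
    push_neg at hge
    rcases le_total x k0 with h | h
    · have hxA : x ∈ A := ⟨h, by linarith [hεpos]⟩
      have : x ≤ u := le_csSup hA_bdd hxA
      linarith [hx.1]
    · have hxB : x ∈ B := ⟨h, by linarith [hεpos]⟩
      have : v ≤ x := csInf_le hB_bdd hxB
      linarith [hx.2]
  -- each point of (u,v) has a T-null neighbourhood
  have hnbhd : ∀ x ∈ Ioo u v, ∃ s : Set ℝ, IsOpen s ∧ x ∈ s ∧ T s = 0 := by
    intro x hx
    have h1 : pot T x < pot nu x :=
      lt_of_lt_of_le (hDmid x hx) ((hcle x).trans (min_le_left _ _))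
    have h2 : cpot T x < cpot nu x := by
      have ha := (hcle x).trans (min_le_right _ _)
      have hb := hDmid x hx
      have hp := hTpar x
      linarith
    have hpotadd : pot nu x = pot (nu - T) x + pot T x := by
      unfold pot
      conv_lhs => rw [← hσsum]
      exact integral_add_measure (integrable_call _ hintσ x) (integrable_call T hintT x)
    have hcpotadd : cpot nu x = cpot (nu - T) x + cpot T x := by
      unfold cpot
      conv_lhs => rw [← hσsum]
      exact integral_add_measure (integrable_put _ hintσ x) (integrable_put T hintT x)
    have hexa : ∃ a, a < x ∧ (nu - T) (Iic a) ≠ 0 := by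
      by_contra hcon
      push_neg at hcon
      have hiio : (nu - T) (Iio x) = 0 := by
        have hcover : Iio x = ⋃ n : ℕ, Iic (x - 1 / (n + 1)) := by
          ext t
          simp only [mem_Iio, mem_iUnion, mem_Iic]
          constructor
          · intro ht
            obtain ⟨n, hn⟩ := exists_nat_one_div_lt (show (0:ℝ) < x - t by linarith)
            exact ⟨n, by linarith⟩
          · intro ⟨n, hn⟩
            have : (0:ℝ) < 1 / (n + 1) := by positivity
            linarith
        rw [hcover]
        exact measure_iUnion_null fun n => hcon _ (by
          have : (0:ℝ) < 1 / ((n:ℝ) + 1) := by positivity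
          linarith)
      have hz : pot (nu - T) x = 0 := by
        unfold pot
        apply integral_eq_zero_of_ae
        rw [Filter.EventuallyEq, ae_iff]
        apply measure_mono_null _ hiio
        intro t ht
        simp only [mem_setOf_eq] at ht
        simp only [mem_Iio]
        by_contra htx
        push_neg at htx
        exact ht (max_eq_right (by linarith))
      linarith
    have hexb : ∃ b, x < b ∧ (nu - T) (Ici b) ≠ 0 := by
      by_contra hcon
      push_neg at hcon
      have hioi : (nu - T) (Ioi x) = 0 := by
        have hcover : Ioi x = ⋃ n : ℕ, Ici (x + 1 / (n + 1)) := by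
          ext t
          simp only [mem_Ioi, mem_iUnion, mem_Ici]
          constructor
          · intro ht
            obtain ⟨n, hn⟩ := exists_nat_one_div_lt (show (0:ℝ) < t - x by linarith)
            exact ⟨n, by linarith⟩
          · intro ⟨n, hn⟩
            have : (0:ℝ) < 1 / (n + 1) := by positivity
            linarith
        rw [hcover]
        exact measure_iUnion_null fun n => hcon _ (by
          have : (0:ℝ) < 1 / ((n:ℝ) + 1) := by positivity
          linarith)
      have hz : cpot (nu - T) x = 0 := by
        unfold cpot
        apply integral_eq_zero_of_ae
        rw [Filter.EventuallyEq, ae_iff]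
        apply measure_mono_null _ hioi
        intro t ht
        simp only [mem_setOf_eq] at ht
        simp only [mem_Ioi]
        by_contra htx
        push_neg at htx
        exact ht (max_eq_right (by linarith))
      linarith
    obtain ⟨a, hax, hwa⟩ := hexa
    obtain ⟨b, hxb, hwb⟩ := hexb
    exact ⟨Ioo a b, isOpen_Ioo, ⟨hax, hxb⟩,
      sweep_null mu nu T hintm hintn ⟨hCxT, hTle, hMax⟩ hax hxb hwa hwb⟩
  -- T is null on (u, v)
  have hTuv : T (Ioo u v) = 0 := by
    choose! S hS1 hS2 hS3 using hnbhd
    obtain ⟨Tc, hTcc, hTceq⟩ := TopologicalSpace.isOpen_iUnion_countable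
      (fun i : ↥(Ioo u v) => S i) (fun i => hS1 i i.2)
    have hcov : Ioo u v ⊆ ⋃ i : ↥(Ioo u v), S i := fun x hx =>
      mem_iUnion.2 ⟨⟨x, hx⟩, hS2 x hx⟩
    have hz : T (⋃ i : ↥(Ioo u v), S i) = 0 := by
      rw [← hTceq]
      exact (measure_biUnion_null_iff hTcc).2 fun i _ => hS3 i i.2
    exact measure_mono_null hcov hz
  -- pot T is affine on [u, v]
  have haff : ∀ x ∈ Icc u v, pot T x
      = (T (Iic u)).toReal * x - ∫ t, t ∂(T.restrict (Iic u)) := by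
    intro x hx
    unfold pot
    conv_lhs => rw [← Measure.restrict_add_restrict_compl (μ := T) (s := Iic u)
      measurableSet_Iic]
    rw [integral_add_measure (integrable_call _ hintT.restrict x)
      (integrable_call _ hintT.restrict x)]
    have hz : ∫ t, max (x - t) 0 ∂(T.restrict (Iic u)ᶜ) = 0 := by
      apply integral_eq_zero_of_ae
      rw [Filter.EventuallyEq, ae_iff]
      have hsub : {t | ¬ max (x - t) 0 = 0} ⊆ Iio x := by
        intro t ht
        simp only [mem_setOf_eq] at ht
        simp only [mem_Iio]
        by_contra htx
        push_neg at htx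
        exact ht (max_eq_right (by linarith))
      apply measure_mono_null hsub
      rw [Measure.restrict_apply measurableSet_Iio, compl_Iic]
      have : Iio x ∩ Ioi u ⊆ Ioo u v := by
        intro t ht
        exact ⟨ht.2, lt_of_lt_of_le ht.1 hx.2⟩
      exact measure_mono_null this hTuv
    have hlin : ∫ t, max (x - t) 0 ∂(T.restrict (Iic u))
        = (T (Iic u)).toReal * x - ∫ t, t ∂(T.restrict (Iic u)) := by
      have hcongr : ∫ t, max (x - t) 0 ∂(T.restrict (Iic u))
          = ∫ t, (x - t) ∂(T.restrict (Iic u)) := by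
        apply integral_congr_ae
        refine (ae_restrict_iff' measurableSet_Iic).2 (ae_of_all _ fun t ht => ?_)
        exact max_eq_left (by
          simp only [mem_Iic] at ht
          linarith [hx.1])
      rw [hcongr, integral_sub (integrable_const x) hintT.restrict, integral_const,
        measureReal_def, Measure.restrict_apply_univ]
      simp [smul_eq_mul, mul_comm]
    rw [hz, hlin]
    ring
  -- final convexity contradiction
  have huv : u < v := lt_trans huk hkv
  set θ := (v - k0) / (v - u) with hθdef
  have hθ1 : 0 ≤ θ := by
    apply div_nonneg <;> linarith
  have hθ2 : 0 ≤ 1 - θ := by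
    have : θ ≤ 1 := by rw [hθdef, div_le_one (by linarith)]; linarith
    linarith
  have hθsum : θ + (1 - θ) = 1 := by ring
  have hcomb : θ • u + (1 - θ) • v = k0 := by
    simp only [smul_eq_mul]
    have hθvu : θ * (v - u) = v - k0 := by
      rw [hθdef]
      exact div_mul_cancel₀ _ (ne_of_gt (by linarith : (0:ℝ) < v - u))
    have h2 : θ * u + (1 - θ) * v = v - θ * (v - u) := by ring
    rw [h2, hθvu]
    ring
  have hconvc := hcconv.2 (mem_univ u) (mem_univ v) hθ1 hθ2 hθsum
  rw [hcomb] at hconvc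
  simp only [smul_eq_mul] at hconvc
  have hcu : c u ≤ pot T u + ε := by linarith [huA.2]
  have hcv : c v ≤ pot T v + ε := by linarith [hvB.2]
  have haffu := haff u ⟨le_refl u, huv.le⟩
  have haffv := haff v ⟨huv.le, le_refl v⟩
  have haffk := haff k0 ⟨huk.le, hkv.le⟩
  set A0 := (T (Iic u)).toReal with hA0
  set B0 := ∫ t, t ∂(T.restrict (Iic u)) with hB0
  have hcombalg : θ * (A0 * u - B0) + (1 - θ) * (A0 * v - B0) = A0 * k0 - B0 := by
    have h1 : θ * u + (1 - θ) * v = k0 := by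
      have := hcomb
      simpa [smul_eq_mul] using this
    calc θ * (A0 * u - B0) + (1 - θ) * (A0 * v - B0)
        = A0 * (θ * u + (1 - θ) * v) - (θ + (1 - θ)) * B0 := by ring
      _ = A0 * k0 - B0 := by rw [h1, hθsum]; ring
  have hck0 : c k0 = pot T k0 + 2 * ε := by rw [hεdef]; ring
  rw [haffu] at hcu
  rw [haffv] at hcv
  rw [hck0, haffk] at hconvc
  have hfin : A0 * k0 - B0 + 2 * ε ≤ A0 * k0 - B0 + ε := by
    calc A0 * k0 - B0 + 2 * ε ≤ θ * c u + (1 - θ) * c v := hconvc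
      _ ≤ θ * (A0 * u - B0 + ε) + (1 - θ) * (A0 * v - B0 + ε) := by
          apply add_le_add
          · exact mul_le_mul_of_nonneg_left hcu hθ1
          · exact mul_le_mul_of_nonneg_left hcv hθ2
      _ = (θ * (A0 * u - B0) + (1 - θ) * (A0 * v - B0)) + (θ + (1 - θ)) * ε := by ring
      _ = A0 * k0 - B0 + ε := by rw [hcombalg, hθsum]; ring
  linarith


theorem stmt15 (mu nu : Measure ℝ) [IsFiniteMeasure mu] [IsFiniteMeasure nu]
    (hintm : Integrable (fun x => x) mu) (hintn : Integrable (fun x => x) nu)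
    (hE : ECx mu nu) (T : Measure ℝ) (c : ℝ → ℝ)
    (hT : IsCounterShadow mu nu T)
    (hc : IsConvexHull
      (fun k => min (pot nu k) (cpot nu k + (mu Set.univ).toReal * k - ∫ x, x ∂mu)) c) :
    ∀ k, pot T k = c k := by
  obtain ⟨h1, h2, h3⟩ := hc
  exact stmt15' mu nu hintm hintn T c hT h1 h2 h3
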